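/- arXiv:2302.02582 — 3 statements merged into one kernel-verified Lean document; each statement's English description precedes it below -/
import Mathlib

section
/- Suppose α, β > 0, γ > 1, σ > 4η > 0, and let (u⁎, v⁎) with u⁎ > 0 and v⁎ > 0 satisfy F₁(u⁎,v⁎) = 0 and F₂(u⁎,v⁎) = 0. Then u⁎ > α/(γ−1) and u₂ < u⁎ < u₁, i.e. u⁎ > max{α/(γ−1), u₂}, where u₁ = (σ + √(σ² − 4ση))/(2σ) and u₂ = (σ − √(σ² − 4ση))/(2σ) are the roots of σu(1−u) − η = 0. -/
/-- Any interior (coexisting) equilibrium `(u⁎,v⁎)` of the kinetics with `α, β > 0`,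
`γ > 1` and `σ > 4η > 0` satisfies `u⁎ > α/(γ-1)` and `u₂ < u⁎ < u₁`, where
`u₁, u₂` are the roots of `σu(1-u) - η = 0`. -/
theorem stmt_3 (α β γ σ η : ℝ) (hα : 0 < α) (hβ : 0 < β) (hγ : 1 < γ)
    (hη : 0 < η) (hσ : 4 * η < σ)
    (us vs : ℝ) (hus : 0 < us) (hvs : 0 < vs)
    (hF₁ : σ * us ^ 2 * (1 - us) - η * us - us * vs / (α + us + β * vs) = 0)
    (hF₂ : γ * us * vs / (α + us + β * vs) - vs = 0)
    (u₁ u₂ : ℝ)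
    (hu₁ : u₁ = (σ + Real.sqrt (σ ^ 2 - 4 * σ * η)) / (2 * σ))
    (hu₂ : u₂ = (σ - Real.sqrt (σ ^ 2 - 4 * σ * η)) / (2 * σ)) :
    α / (γ - 1) < us ∧ u₂ < us ∧ us < u₁ := by
  have hσ0 : 0 < σ := by linarith
  have hD : 0 < α + us + β * vs := by positivity
  have hD' : α + us + β * vs ≠ 0 := ne_of_gt hD
  have h2 : γ * us = α + us + β * vs := by
    have := hF₂
    field_simp at this
    have h3 : (γ * us - (α + us + β * vs)) * vs = 0 := by linarith [this, mul_comm (γ * us) vs]; 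
    rcases mul_eq_zero.mp h3 with h | h
    · linarith
    · exact absurd h (ne_of_gt hvs)
  have h1 : σ * us * (1 - us) - η = vs / (α + us + β * vs) := by
    have := hF₁
    field_simp at this ⊢
    nlinarith [this]
  have hq : 0 < σ * us * (1 - us) - η := by
    rw [h1]; positivity
  constructor
  · rw [div_lt_iff₀ (by linarith : (0:ℝ) < γ - 1)]
    nlinarith [h2]
  have hδ : 0 ≤ σ ^ 2 - 4 * σ * η := by nlinarith
  set s := Real.sqrt (σ ^ 2 - 4 * σ * η) with hs
  have hs2 : s ^ 2 = σ ^ 2 - 4 * σ * η := Real.sq_sqrt hδ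
  have hs0 : 0 < s := Real.sqrt_pos.mpr (by nlinarith)
  constructor
  · rw [hu₂, div_lt_iff₀ (by linarith : (0:ℝ) < 2 * σ)]
    nlinarith [sq_nonneg (σ - 2 * σ * us - s), sq_nonneg (σ - 2 * σ * us + s)]
  · rw [hu₁, lt_div_iff₀ (by linarith : (0:ℝ) < 2 * σ)]
    nlinarith [sq_nonneg (2 * σ * us - σ - s), sq_nonneg (2 * σ * us - σ + s)]
end

section
/- Let α > 0, β > 0 and M > 0. Then for all real numbers u, ū ∈ (0, M] and v, v̄ > 0, one has (ū − u)·( uv/(α+u+βv) − ūv̄/(α+ū+βv̄) ) ≤ (M/α)·|u − ū|·|v − v̄| ≤ (M/(2α))·((u−ū)² + (v−v̄)²). -/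
/-- Pointwise bound behind the estimate of `I₂`: for `α, β > 0`, `M > 0`, all
`u, ū ∈ (0, M]` and `v, v̄ > 0`,
`(ū - u)(uv/(α+u+βv) - ūv̄/(α+ū+βv̄)) ≤ (M/α)|u-ū||v-v̄| ≤ (M/(2α))((u-ū)² + (v-v̄)²)`. -/
theorem stmt_13 (α β M : ℝ) (hα : 0 < α) (hβ : 0 < β) (hM : 0 < M) :
    ∀ u ub v vb : ℝ, 0 < u → u ≤ M → 0 < ub → ub ≤ M → 0 < v → 0 < vb →
      (ub - u) * (u * v / (α + u + β * v) - ub * vb / (α + ub + β * vb)) ≤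
          M / α * (|u - ub| * |v - vb|) ∧
      M / α * (|u - ub| * |v - vb|) ≤
          M / (2 * α) * ((u - ub) ^ 2 + (v - vb) ^ 2) := by
  intro u ub v vb hu huM hub hubM hv hvb
  have hD1 : 0 < α + u + β * v := by positivity
  have hD2 : 0 < α + ub + β * vb := by positivity
  set A : ℝ := |u - ub| * |v - vb| with hA
  have hA0 : 0 ≤ A := by positivity
  constructor
  · have key : (ub - u) * (u * v / (α + u + β * v) - ub * vb / (α + ub + β * vb)) =
        ((ub - u) * (v - vb) * (u * (α + ub)) - (u - ub) ^ 2 * (vb * (α + β * v))) /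
          ((α + u + β * v) * (α + ub + β * vb)) := by
      field_simp
      ring
    rw [key]
    have habs : (ub - u) * (v - vb) ≤ A := by
      calc (ub - u) * (v - vb) ≤ |(ub - u) * (v - vb)| := le_abs_self _
        _ = A := by rw [abs_mul, abs_sub_comm ub u]
    have hN : (ub - u) * (v - vb) * (u * (α + ub)) - (u - ub) ^ 2 * (vb * (α + β * v)) ≤
        A * (u * (α + ub)) := by
      have h1 : 0 ≤ (u - ub) ^ 2 * (vb * (α + β * v)) := by positivity
      have h2 : (ub - u) * (v - vb) * (u * (α + ub)) ≤ A * (u * (α + ub)) := by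
        apply mul_le_mul_of_nonneg_right habs
        positivity
      linarith
    calc ((ub - u) * (v - vb) * (u * (α + ub)) - (u - ub) ^ 2 * (vb * (α + β * v))) /
          ((α + u + β * v) * (α + ub + β * vb))
        ≤ (A * (u * (α + ub))) / ((α + u + β * v) * (α + ub + β * vb)) := by
          gcongr
      _ = A * ((u * (α + ub)) / ((α + u + β * v) * (α + ub + β * vb))) := by ring
      _ ≤ A * (M / α) := by
          apply mul_le_mul_of_nonneg_left _ hA0
          rw [div_le_div_iff₀ (by positivity) hα]
          have s2 : (α + ub) * α ≤ (α + ub + β * vb) * (α + u + β * v) :=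
            mul_le_mul (by nlinarith) (by nlinarith) hα.le (by positivity)
          have s3 := mul_le_mul_of_nonneg_left s2 hM.le
          nlinarith [mul_le_mul_of_nonneg_right huM (mul_nonneg (by positivity : (0:ℝ) ≤ α + ub) hα.le)]
      _ = M / α * A := by ring
  · have hsq : A ≤ ((u - ub) ^ 2 + (v - vb) ^ 2) / 2 := by
      nlinarith [sq_nonneg (|u - ub| - |v - vb|), sq_abs (u - ub), sq_abs (v - vb)]
    have h2 : M / (2 * α) * ((u - ub) ^ 2 + (v - vb) ^ 2) =
        M / α * (((u - ub) ^ 2 + (v - vb) ^ 2) / 2) := by ring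
    rw [h2]
    exact mul_le_mul_of_nonneg_left hsq (by positivity)
end

section
/- Let α > 0, β > 0 and γ > 0. Then for all real numbers u, ū > 0 and v, v̄ > 0, one has (v − v̄)·v̄·( γu/(α+u+βv) − γū/(α+ū+βv̄) ) ≤ (γ/β)·|u − ū|·|v − v̄| ≤ (γ/(2β))·((u−ū)² + (v−v̄)²). -/
/-- Pointwise bound behind the estimate of `I₃`: for `α, β, γ > 0`, all `u, ū > 0`
and `v, v̄ > 0`,
`(v - v̄)·v̄·(γu/(α+u+βv) - γū/(α+ū+βv̄)) ≤ (γ/β)|u-ū||v-v̄| ≤ (γ/(2β))((u-ū)² + (v-v̄)²)`. -/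
theorem stmt_14 (α β γ : ℝ) (hα : 0 < α) (hβ : 0 < β) (hγ : 0 < γ) :
    ∀ u ub v vb : ℝ, 0 < u → 0 < ub → 0 < v → 0 < vb →
      (v - vb) * vb * (γ * u / (α + u + β * v) - γ * ub / (α + ub + β * vb)) ≤
          γ / β * (|u - ub| * |v - vb|) ∧
      γ / β * (|u - ub| * |v - vb|) ≤
          γ / (2 * β) * ((u - ub) ^ 2 + (v - vb) ^ 2) := by
  intro u ub v vb hu hub hv hvb
  have hD1 : 0 < α + u + β * v := by positivity
  have hD2 : 0 < α + ub + β * vb := by positivity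
  have hA : 0 ≤ |u - ub| := abs_nonneg _
  have hB : 0 ≤ |v - vb| := abs_nonneg _
  have hA1 : u - ub ≤ |u - ub| := le_abs_self _
  have hA2 : -(u - ub) ≤ |u - ub| := neg_le_abs _
  have hB1 : v - vb ≤ |v - vb| := le_abs_self _
  have hB2 : -(v - vb) ≤ |v - vb| := neg_le_abs _
  constructor
  · have key : γ * u / (α + u + β * v) - γ * ub / (α + ub + β * vb) =
        γ * ((α + β * v) * (u - ub) - β * u * (v - vb)) /
          ((α + u + β * v) * (α + ub + β * vb)) := by
      field_simp
      ring
    rw [key, mul_comm ((v - vb) * vb), div_mul_eq_mul_div, div_le_iff₀ (by positivity)]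
    have h1 : (v - vb) * (u - ub) ≤ |u - ub| * |v - vb| := by
      rcases le_or_gt 0 (v - vb) with h | h
      · nlinarith [abs_of_nonneg h]
      · nlinarith [abs_of_neg h]
    have hc : β * vb * (α + β * v) ≤ (α + u + β * v) * (α + ub + β * vb) := by
      nlinarith [mul_pos hβ hvb, mul_pos hα hu, mul_pos hα hub]
    have hcpos : 0 < β * vb * (α + β * v) := by positivity
    have hkey : β * ((((α + β * v) * (u - ub) - β * u * (v - vb)) * ((v - vb) * vb))) ≤
        (|u - ub| * |v - vb|) * ((α + u + β * v) * (α + ub + β * vb)) := by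
      nlinarith [mul_le_mul_of_nonneg_left h1 hcpos.le,
        mul_nonneg (mul_nonneg hA hB) (sub_nonneg.mpr hc),
        mul_nonneg (mul_pos hβ (mul_pos hβ (mul_pos hu hvb))).le (sq_nonneg (v - vb))]
    rw [div_mul_eq_mul_div, div_mul_eq_mul_div, le_div_iff₀ hβ]
    nlinarith [mul_le_mul_of_nonneg_left hkey hγ.le]
  · calc γ / β * (|u - ub| * |v - vb|) = γ / (2 * β) * (2 * (|u - ub| * |v - vb|)) := by ring
      _ ≤ γ / (2 * β) * ((u - ub) ^ 2 + (v - vb) ^ 2) := by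
          apply mul_le_mul_of_nonneg_left _ (by positivity)
          nlinarith [sq_nonneg (|u - ub| - |v - vb|), sq_abs (u - ub), sq_abs (v - vb)]
end
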